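/- For constants a, b, c ≥ 0, the function G(x,y) = exp{ -e^{-x-a-c} - e^{-y-b-c} + e^{-max(x,y)-a-b-c} } on ℝ² is a bivariate cumulative distribution function with Gumbel-type marginals; in particular it is nondecreasing in each variable, its marginal limits are G(x,∞) = exp{-e^{-x-a-c}} and G(∞,y) = exp{-e^{-y-b-c}}, and for all x₁<x₂, y₁<y₂ the rectangle inequality G(x₂,y₂)-G(x₁,y₂)-G(x₂,y₁)+G(x₁,y₁) ≥ 0 holds provided e^{-a-b-c} ≤ min(e^{-a-c}, e^{-b-c}) (which holds automatically since a,b,c ≥ 0... specifically since e^{-b} ≤ 1 and e^{-a} ≤ 1). -/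

import Mathlib

open Filter Topology Real

lemma key_ineq (a c d : ℝ) (hd : 0 ≤ d) {x₁ x₂ : ℝ} (h : x₁ ≤ x₂) :
    -Real.exp (-x₁ - a - c) + Real.exp (-x₁ - a - c) * Real.exp (-d) ≤
    -Real.exp (-x₂ - a - c) + Real.exp (-x₂ - a - c) * Real.exp (-d) := by
  have h1 : Real.exp (-x₂ - a - c) ≤ Real.exp (-x₁ - a - c) :=
    Real.exp_le_exp.mpr (by linarith)
  have h2 : Real.exp (-d) ≤ 1 := Real.exp_le_one_iff.mpr (by linarith)
  nlinarith [Real.exp_pos (-x₂ - a - c)]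

lemma Fmono_x (a b c : ℝ) (hb : 0 ≤ b) (y : ℝ) {x₁ x₂ : ℝ} (h : x₁ ≤ x₂) :
    -Real.exp (-x₁ - a - c) + Real.exp (-max x₁ y - a - b - c) ≤
    -Real.exp (-x₂ - a - c) + Real.exp (-max x₂ y - a - b - c) := by
  have eabc : ∀ z : ℝ, -z - a - b - c = -z - a - c + -b := fun z => by ring
  have key := key_ineq a c b hb h
  rw [← Real.exp_add, ← Real.exp_add, ← eabc, ← eabc] at key
  rcases le_total x₂ y with hy | hy
  · rw [max_eq_right (h.trans hy), max_eq_right hy]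
    have := Real.exp_le_exp.mpr (show -x₂ - a - c ≤ -x₁ - a - c by linarith)
    linarith
  · rcases le_total x₁ y with hy' | hy'
    · rw [max_eq_right hy', max_eq_left hy]
      have h3 : Real.exp (-y - a - b - c) ≤ Real.exp (-x₁ - a - b - c) :=
        Real.exp_le_exp.mpr (by linarith)
      linarith
    · rw [max_eq_left hy', max_eq_left hy]
      exact key

lemma Fmono_y (a b c : ℝ) (ha : 0 ≤ a) (x : ℝ) {y₁ y₂ : ℝ} (h : y₁ ≤ y₂) :
    -Real.exp (-y₁ - b - c) + Real.exp (-max x y₁ - a - b - c) ≤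
    -Real.exp (-y₂ - b - c) + Real.exp (-max x y₂ - a - b - c) := by
  have key := Fmono_x b a c ha x h
  rw [max_comm y₁ x, max_comm y₂ x,
    show -max x y₁ - b - a - c = -max x y₁ - a - b - c from by ring,
    show -max x y₂ - b - a - c = -max x y₂ - a - b - c from by ring] at key
  exact key

lemma min_supermod {s s' t t' : ℝ} (hs : s ≤ s') (ht : t ≤ t') :
    min s' t + min s t' ≤ min s t + min s' t' := by
  simp only [min_def]; split_ifs <;> linarith

lemma exp_max_min (x y k : ℝ) :
    Real.exp (-max x y + k) = min (Real.exp (-x + k)) (Real.exp (-y + k)) := by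
  rcases le_total x y with h | h
  · rw [max_eq_right h, min_eq_right (Real.exp_le_exp.mpr (by linarith))]
  · rw [max_eq_left h, min_eq_left (Real.exp_le_exp.mpr (by linarith))]

lemma exp_rect {F11 F12 F21 F22 : ℝ} (h21 : F11 ≤ F21) (h12 : F11 ≤ F12)
    (hsm : F12 + F21 ≤ F11 + F22) :
    0 ≤ Real.exp F22 - Real.exp F12 - Real.exp F21 + Real.exp F11 := by
  have h1 : Real.exp (F12 + (F21 - F11)) ≤ Real.exp F22 :=
    Real.exp_le_exp.mpr (by linarith)
  have h2 : Real.exp F11 * (Real.exp (F21 - F11) - 1) ≤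
      Real.exp F12 * (Real.exp (F21 - F11) - 1) := by
    have := Real.exp_le_exp.mpr h12
    have h3 : (1:ℝ) ≤ Real.exp (F21 - F11) := Real.one_le_exp (by linarith)
    nlinarith
  have e1 : Real.exp (F12 + (F21 - F11)) = Real.exp F12 * Real.exp (F21 - F11) :=
    Real.exp_add _ _
  have e2 : Real.exp F11 * Real.exp (F21 - F11) = Real.exp F21 := by
    rw [← Real.exp_add]; ring_nf
  nlinarith

lemma tendsto_aux (a b c K : ℝ) :
    Tendsto (fun y : ℝ => Real.exp
      (-K - Real.exp (-y - b - c) + Real.exp (-y - a - b - c)))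
      atTop (𝓝 (Real.exp (-K))) := by
  have hbot : Tendsto (fun y : ℝ => -y - b - c) atTop atBot := by
    apply tendsto_atBot_add_const_right
    apply tendsto_atBot_add_const_right
    exact tendsto_neg_atTop_atBot
  have hbot2 : Tendsto (fun y : ℝ => -y - a - b - c) atTop atBot := by
    apply tendsto_atBot_add_const_right
    apply tendsto_atBot_add_const_right
    apply tendsto_atBot_add_const_right
    exact tendsto_neg_atTop_atBot
  have h1 : Tendsto (fun y : ℝ => Real.exp (-y - b - c)) atTop (𝓝 0) :=
    Real.tendsto_exp_atBot.comp hbot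
  have h2 : Tendsto (fun y : ℝ => Real.exp (-y - a - b - c)) atTop (𝓝 0) :=
    Real.tendsto_exp_atBot.comp hbot2
  have h3 : Tendsto (fun y : ℝ => -K - Real.exp (-y - b - c) + Real.exp (-y - a - b - c))
      atTop (𝓝 (-K - 0 + 0)) := (tendsto_const_nhds.sub h1).add h2
  have h4 := (Real.continuous_exp.tendsto _).comp h3
  simpa [Function.comp_def] using h4

/-- For a,b,c ≥ 0, the function
G(x,y) = exp(-e^{-x-a-c} - e^{-y-b-c} + e^{-max(x,y)-a-b-c}) is a bivariate c.d.f.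
with Gumbel-type marginals: nondecreasing in each variable, with marginal limits
G(x,∞) = exp(-e^{-x-a-c}) and G(∞,y) = exp(-e^{-y-b-c}), and satisfying the
rectangle (2-increasing) inequality. -/
theorem stmt_16 (a b c : ℝ) (ha : 0 ≤ a) (hb : 0 ≤ b) (hc : 0 ≤ c) (G : ℝ → ℝ → ℝ)
    (hG : ∀ x y, G x y = Real.exp
      (-Real.exp (-x - a - c) - Real.exp (-y - b - c) + Real.exp (-max x y - a - b - c))) :
    (∀ y, Monotone (fun x => G x y)) ∧ (∀ x, Monotone (fun y => G x y)) ∧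
      (∀ x, Tendsto (fun y => G x y) atTop (𝓝 (Real.exp (-Real.exp (-x - a - c))))) ∧
      (∀ y, Tendsto (fun x => G x y) atTop (𝓝 (Real.exp (-Real.exp (-y - b - c))))) ∧
      (∀ x₁ x₂ y₁ y₂ : ℝ, x₁ < x₂ → y₁ < y₂ →
        0 ≤ G x₂ y₂ - G x₁ y₂ - G x₂ y₁ + G x₁ y₁) := by
  refine ⟨?_, ?_, ?_, ?_, ?_⟩
  · intro y x₁ x₂ h
    simp only [hG]
    exact Real.exp_le_exp.mpr (by have := Fmono_x a b c hb y h; linarith)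
  · intro x y₁ y₂ h
    simp only [hG]
    exact Real.exp_le_exp.mpr (by have := Fmono_y a b c ha x h; linarith)
  · intro x
    refine Tendsto.congr' ?_ (tendsto_aux a b c (Real.exp (-x - a - c)))
    filter_upwards [eventually_ge_atTop x] with y hy
    rw [hG, max_eq_right hy]
  · intro y
    refine Tendsto.congr' ?_ (tendsto_aux b a c (Real.exp (-y - b - c)))
    filter_upwards [eventually_ge_atTop y] with x hx
    rw [hG, max_eq_left hx,
      show -x - b - a - c = -x - a - b - c from by ring]
    congr 1
    ring
  · intro x₁ x₂ y₁ y₂ hx hy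
    simp only [hG]
    have h21 : -Real.exp (-x₁ - a - c) - Real.exp (-y₁ - b - c)
        + Real.exp (-max x₁ y₁ - a - b - c) ≤
        -Real.exp (-x₂ - a - c) - Real.exp (-y₁ - b - c)
        + Real.exp (-max x₂ y₁ - a - b - c) := by
      have := Fmono_x a b c hb y₁ hx.le; linarith
    have h12 : -Real.exp (-x₁ - a - c) - Real.exp (-y₁ - b - c)
        + Real.exp (-max x₁ y₁ - a - b - c) ≤
        -Real.exp (-x₁ - a - c) - Real.exp (-y₂ - b - c)
        + Real.exp (-max x₁ y₂ - a - b - c) := by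
      have := Fmono_y a b c ha x₁ hy.le; linarith
    have hm : ∀ x y : ℝ, Real.exp (-max x y - a - b - c)
        = min (Real.exp (-x + -(a + b + c))) (Real.exp (-y + -(a + b + c))) := by
      intro x y
      rw [show -max x y - a - b - c = -max x y + -(a + b + c) from by ring, exp_max_min]
    have hp : Real.exp (-x₂ + -(a + b + c)) ≤ Real.exp (-x₁ + -(a + b + c)) :=
      Real.exp_le_exp.mpr (by linarith)
    have hq : Real.exp (-y₂ + -(a + b + c)) ≤ Real.exp (-y₁ + -(a + b + c)) :=
      Real.exp_le_exp.mpr (by linarith)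
    have hmin := min_supermod hp hq
    have hsm : (-Real.exp (-x₁ - a - c) - Real.exp (-y₂ - b - c)
          + Real.exp (-max x₁ y₂ - a - b - c))
        + (-Real.exp (-x₂ - a - c) - Real.exp (-y₁ - b - c)
          + Real.exp (-max x₂ y₁ - a - b - c)) ≤
        (-Real.exp (-x₁ - a - c) - Real.exp (-y₁ - b - c)
          + Real.exp (-max x₁ y₁ - a - b - c))
        + (-Real.exp (-x₂ - a - c) - Real.exp (-y₂ - b - c)
          + Real.exp (-max x₂ y₂ - a - b - c)) := by
      simp only [hm]; linarith
    exact exp_rect h21 h12 hsm
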